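/- In the setup (G centerless, f, h : G → Aut(G) with h(σ) = conj(g(σ))∘f(σ), g a bijection satisfying g(στ) = g(σ)·f(σ)(g(τ)), and N = {ρ(g(σ))∘f(σ) : σ ∈ G} a normal subgroup of Hol(G)), the image g(ker(f)) is a characteristic subgroup of G isomorphic to ker(f), and the image g(ker(h)) is a characteristic subgroup of G isomorphic to ker(h). -/

import Mathlib

/-- The left regular representation `λ : G →* Perm G`, `λ(σ)(x) = σ·x`. -/
def lambda (G : Type*) [Group G] : G →* Equiv.Perm G where
  toFun σ := Equiv.mulLeft σ
  map_one' := by ext x; simp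
  map_mul' σ τ := by ext x; simp [mul_assoc]

/-- The right regular representation `ρ : G →* Perm G`, `ρ(σ)(x) = x·σ⁻¹`. -/
def rho (G : Type*) [Group G] : G →* Equiv.Perm G where
  toFun σ := Equiv.mulRight σ⁻¹
  map_one' := by ext x; simp
  map_mul' σ τ := by ext x; simp [mul_assoc]

/-- The holomorph `Hol(G)`: the normalizer of `λ(G)` in `Perm G`. -/
def Hol (G : Type*) [Group G] : Subgroup (Equiv.Perm G) :=
  Subgroup.normalizer ((lambda G).range : Set (Equiv.Perm G))

/-- Automorphisms, viewed as permutations, normalize `λ(G)`. -/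
lemma toPerm_mem_Hol (G : Type*) [Group G] (φ : MulAut G) :
    MulAut.toPerm G φ ∈ Hol G := by
  have aux : ∀ (ψ : MulAut G) (s : G),
      MulAut.toPerm G ψ * lambda G s * (MulAut.toPerm G ψ)⁻¹ = lambda G (ψ s) := by
    intro ψ s
    rw [mul_inv_eq_iff_eq_mul]
    ext x
    simp [lambda, show ∀ (ψ : MulAut G) (x : G), MulAut.toPerm G ψ x = ψ x from fun _ _ => rfl, show ∀ (ψ : MulAut G) (x : G), (MulAut.toPerm G ψ)⁻¹ x = ψ⁻¹ x from fun _ _ => rfl, Equiv.Perm.mul_apply]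
  rw [Hol, Subgroup.mem_normalizer_iff]
  intro p
  constructor
  · rintro ⟨s, rfl⟩
    exact ⟨φ s, (aux φ s).symm⟩
  · rintro ⟨s, hs⟩
    refine ⟨φ⁻¹ s, ?_⟩
    have h2 := aux φ⁻¹ s
    rw [map_inv, inv_inv] at h2
    rw [← h2, hs]
    group

/-- In the setup, `g(ker f)` is a characteristic subgroup of `G`
isomorphic to `ker f`, and `g(ker h)` is a characteristic subgroup of `G`
isomorphic to `ker h`. -/
theorem image_of_kernels_characteristic
    (G : Type*) [Group G] (hZ : Subgroup.center G = ⊥)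
    (f h : G →* MulAut G) (g : Equiv.Perm G) (hg1 : g 1 = 1)
    (hrel : ∀ σ τ : G, g (σ * τ) = g σ * (f σ) (g τ))
    (hh : ∀ σ : G, h σ = MulAut.conj (g σ) * f σ)
    (N : Subgroup (Equiv.Perm G))
    (hN : (N : Set (Equiv.Perm G))
      = {q | ∃ σ : G, q = rho G (g σ) * MulAut.toPerm G (f σ)})
    (hNle : N ≤ Hol G)
    (hNnorm : ∀ x ∈ Hol G, ∀ n ∈ N, x * n * x⁻¹ ∈ N)
    :
    (∃ Kf : Subgroup G, (Kf : Set G) = ⇑g '' (f.ker : Set G) ∧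
        Kf.Characteristic ∧ Nonempty (↥Kf ≃* ↥f.ker)) ∧
      (∃ Kh : Subgroup G, (Kh : Set G) = ⇑g '' (h.ker : Set G) ∧
        Kh.Characteristic ∧ Nonempty (↥Kh ≃* ↥h.ker)) := by
  -- basic identities
  have hginv : ∀ σ : G, (f σ) (g σ⁻¹) = (g σ)⁻¹ := by
    intro σ
    have := hrel σ σ⁻¹
    rw [mul_inv_cancel, hg1] at this
    exact (eq_inv_of_mul_eq_one_right this.symm)
  -- the key lemma: conjugating elements of N by an automorphism
  have key : ∀ (φ : MulAut G) (σ : G), ∃ τ : G,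
      g τ = φ (g σ) ∧ f τ = φ * f σ * φ⁻¹ := by
    intro φ σ
    have hn : rho G (g σ) * MulAut.toPerm G (f σ) ∈ N := by
      have : rho G (g σ) * MulAut.toPerm G (f σ) ∈ (N : Set (Equiv.Perm G)) := by
        rw [hN]; exact ⟨σ, rfl⟩
      exact this
    have hconj := hNnorm (MulAut.toPerm G φ) (toPerm_mem_Hol G φ)
      (rho G (g σ) * MulAut.toPerm G (f σ)) hn
    rw [← Subgroup.mem_carrier] at hconj
    rw [show (N.carrier = (N : Set (Equiv.Perm G))) from rfl, hN] at hconj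
    obtain ⟨τ, hτ⟩ := hconj
    have heval : ∀ x : G, φ ((f σ) (φ⁻¹ x) * (g σ)⁻¹) = (f τ) x * (g τ)⁻¹ := by
      intro x
      have := congrFun (congrArg (fun (e : Equiv.Perm G) => (e : G → G)) hτ) x
      simpa [rho, show ∀ (ψ : MulAut G) (x : G), MulAut.toPerm G ψ x = ψ x from fun _ _ => rfl, show ∀ (ψ : MulAut G) (x : G), (MulAut.toPerm G ψ)⁻¹ x = ψ⁻¹ x from fun _ _ => rfl, Equiv.Perm.mul_apply] using this
    have h1 : g τ = φ (g σ) := by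
      have h0 := heval 1
      simp only [map_one, one_mul, map_inv] at h0
      exact inv_injective h0.symm
    have h4 : ∀ y : G, (f τ) y = φ ((f σ) (φ⁻¹ y)) := by
      intro y
      have h2 := heval y
      rw [map_mul, map_inv, ← h1] at h2
      exact (mul_right_cancel h2).symm
    refine ⟨τ, h1, ?_⟩
    ext x
    rw [h4 x]
    simp [MulAut.mul_apply]
  -- ker f facts
  have hker_mul : ∀ σ τ : G, σ ∈ f.ker → g (σ * τ) = g σ * g τ := by
    intro σ τ hσ
    rw [hrel σ τ, MonoidHom.mem_ker.mp hσ]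
    rfl
  have hker_inv : ∀ σ : G, σ ∈ f.ker → g σ⁻¹ = (g σ)⁻¹ := by
    intro σ hσ
    have := hginv σ
    rw [MonoidHom.mem_ker.mp hσ] at this
    exact this
  -- ker h facts
  have hh_conj : ∀ σ : G, σ ∈ h.ker → ∀ x : G, (f σ) x = (g σ)⁻¹ * x * g σ := by
    intro σ hσ x
    have h0 : MulAut.conj (g σ) * f σ = 1 := by
      rw [← hh σ]; exact MonoidHom.mem_ker.mp hσ
    have hfe : (f σ) = (MulAut.conj (g σ))⁻¹ := eq_inv_of_mul_eq_one_right h0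
    rw [hfe, MulAut.conj_inv_apply]
  have hkerh_mul : ∀ σ τ : G, σ ∈ h.ker → g (σ * τ) = g τ * g σ := by
    intro σ τ hσ
    rw [hrel σ τ, hh_conj σ hσ (g τ)]
    group
  have hkerh_inv : ∀ σ : G, σ ∈ h.ker → g σ⁻¹ = (g σ)⁻¹ := by
    intro σ hσ
    have h1 := hginv σ
    rw [hh_conj σ hσ (g σ⁻¹)] at h1
    have h2 : g σ⁻¹ * g σ = 1 := by
      have h3 := congrArg (fun y => g σ * y) h1
      simpa [mul_assoc] using h3
    exact eq_inv_of_mul_eq_one_left h2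
  -- conjugation identity for h under the key lemma
  have hkey_h : ∀ (φ : MulAut G) (σ τ : G), g τ = φ (g σ) → f τ = φ * f σ * φ⁻¹ →
      h τ = φ * h σ * φ⁻¹ := by
    intro φ σ τ h1 h2
    rw [hh τ, hh σ, h1, h2]
    have h3 : MulAut.conj (φ (g σ)) = φ * MulAut.conj (g σ) * φ⁻¹ := by
      ext x
      simp [MulAut.conj_apply, MulAut.mul_apply, map_mul, map_inv, mul_assoc]
    rw [h3]
    group
  constructor
  · -- Kf
    let Kf : Subgroup G :=
      { carrier := ⇑g '' (f.ker : Set G)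
        one_mem' := ⟨1, f.ker.one_mem, hg1⟩
        mul_mem' := by
          rintro a b ⟨σ, hσ, rfl⟩ ⟨τ, hτ, rfl⟩
          exact ⟨σ * τ, f.ker.mul_mem hσ hτ, hker_mul σ τ hσ⟩
        inv_mem' := by
          rintro a ⟨σ, hσ, rfl⟩
          exact ⟨σ⁻¹, f.ker.inv_mem hσ, hker_inv σ hσ⟩ }
    refine ⟨Kf, rfl, ?_, ?_⟩
    · rw [Subgroup.characteristic_iff_map_le]
      intro φ x hx
      simp only [Subgroup.mem_map] at hx
      obtain ⟨y, hy, rfl⟩ := hx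
      obtain ⟨σ, hσ, rfl⟩ := hy
      obtain ⟨τ, h1, h2⟩ := key φ σ
      refine ⟨τ, ?_, h1⟩
      have hσ' : f σ = 1 := hσ
      show f τ = 1
      rw [h2, hσ']
      group
    · -- iso
      let e : f.ker →* G :=
        { toFun := fun σ => g σ.1
          map_one' := hg1
          map_mul' := fun σ τ => hker_mul σ.1 τ.1 σ.2 }
      have hinj : Function.Injective e := by
        intro a b hab
        exact Subtype.ext (g.injective hab)
      have hrange : e.range = Kf := by
        apply Subgroup.ext
        intro x
        constructor
        · rintro ⟨σ, rfl⟩; exact ⟨σ.1, σ.2, rfl⟩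
        · rintro ⟨σ, hσ, rfl⟩; exact ⟨⟨σ, hσ⟩, rfl⟩
      exact ⟨((MonoidHom.ofInjective hinj).trans
        (MulEquiv.subgroupCongr hrange)).symm⟩
  · -- Kh
    let Kh : Subgroup G :=
      { carrier := ⇑g '' (h.ker : Set G)
        one_mem' := ⟨1, h.ker.one_mem, hg1⟩
        mul_mem' := by
          rintro a b ⟨σ, hσ, rfl⟩ ⟨τ, hτ, rfl⟩
          exact ⟨τ * σ, h.ker.mul_mem hτ hσ, hkerh_mul τ σ hτ⟩
        inv_mem' := by
          rintro a ⟨σ, hσ, rfl⟩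
          exact ⟨σ⁻¹, h.ker.inv_mem hσ, hkerh_inv σ hσ⟩ }
    refine ⟨Kh, rfl, ?_, ?_⟩
    · rw [Subgroup.characteristic_iff_map_le]
      intro φ x hx
      simp only [Subgroup.mem_map] at hx
      obtain ⟨y, hy, rfl⟩ := hx
      obtain ⟨σ, hσ, rfl⟩ := hy
      obtain ⟨τ, h1, h2⟩ := key φ σ
      refine ⟨τ, ?_, h1⟩
      have hσ' : h σ = 1 := hσ
      show h τ = 1
      rw [hkey_h φ σ τ h1 h2, hσ']
      group
    · -- iso
      let e : h.ker →* G :=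
        { toFun := fun σ => g σ.1⁻¹
          map_one' := by simpa using hg1
          map_mul' := fun σ τ => by
            show g (((σ * τ : h.ker) : G))⁻¹ = g σ.1⁻¹ * g τ.1⁻¹
            have h1 : ((σ * τ : h.ker) : G)⁻¹ = τ.1⁻¹ * σ.1⁻¹ := by
              push_cast; group
            rw [h1]
            exact hkerh_mul τ.1⁻¹ σ.1⁻¹ (h.ker.inv_mem τ.2) }
      have hinj : Function.Injective e := by
        intro a b hab
        have := g.injective hab
        exact Subtype.ext (inv_injective this)
      have hrange : e.range = Kh := by
        apply Subgroup.ext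
        intro x
        constructor
        · rintro ⟨σ, rfl⟩; exact ⟨σ.1⁻¹, h.ker.inv_mem σ.2, rfl⟩
        · rintro ⟨σ, hσ, rfl⟩
          exact ⟨⟨σ⁻¹, h.ker.inv_mem hσ⟩, by simp [e]⟩
      exact ⟨((MonoidHom.ofInjective hinj).trans
        (MulEquiv.subgroupCongr hrange)).symm⟩
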